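/- Let f∈C^∞(ℝ²) with supp f ⊂ {(x,y): y ≥ x²}. Then for every integer k≥1 and every (ξ,η)∈ℝ², R[x^k f](ξ,η) = ∫_{−∞}^{η} ((η−η')^{k−1}/(k−1)!) · ∂_ξ^k R[f](ξ,η') dη', i.e. the k-fold convolution in η of the Heaviside function with ∂_ξ^k R[f] equals the Radon transform of x^k f(x,y). -/

import Mathlib

open MeasureTheory Set

/-- The Radon transform `R[f](ξ,η) = ∫ f(x, ξx+η) dx`. -/
noncomputable def radon (f : ℝ → ℝ → ℝ) (ξ η : ℝ) : ℝ :=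
  ∫ x : ℝ, f x (ξ * x + η)

noncomputable def Dk (f : ℝ → ℝ → ℝ) : ℕ → ℝ × ℝ → ℝ
  | 0 => fun p => f p.1 p.2
  | (j+1) => fun p => fderiv ℝ (Dk f j) p (0, 1)

theorem Dk_contDiff {f : ℝ → ℝ → ℝ} (hf : ContDiff ℝ (⊤ : ℕ∞) (fun p : ℝ × ℝ => f p.1 p.2)) :
    ∀ j, ContDiff ℝ (⊤ : ℕ∞) (Dk f j)
  | 0 => hf
  | (j+1) => ((Dk_contDiff hf j).fderiv_right (by exact_mod_cast le_top)).clm_apply contDiff_const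

theorem Dk_zero {f : ℝ → ℝ → ℝ} (hsupp : ∀ x y : ℝ, y < x^2 → f x y = 0) :
    ∀ j (p : ℝ × ℝ), p.2 < p.1^2 → Dk f j p = 0
  | 0, p, hp => hsupp p.1 p.2 hp
  | (j+1), p, hp => by
    have hopen : IsOpen {q : ℝ × ℝ | q.2 < q.1^2} :=
      isOpen_lt continuous_snd (continuous_fst.pow 2)
    have hev : Dk f j =ᶠ[nhds p] (fun _ => 0) := by
      filter_upwards [hopen.mem_nhds hp] with q hq
      exact Dk_zero hsupp j q hq
    show fderiv ℝ (Dk f j) p (0,1) = 0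
    rw [hev.fderiv_eq, fderiv_fun_const]
    rfl

theorem Dk_partial {f : ℝ → ℝ → ℝ} (hf : ContDiff ℝ (⊤ : ℕ∞) (fun p : ℝ × ℝ => f p.1 p.2))
    (j : ℕ) (x y : ℝ) :
    HasDerivAt (fun t => Dk f j (x, t)) (Dk f (j+1) (x, y)) y := by
  have hd : HasFDerivAt (Dk f j) (fderiv ℝ (Dk f j) (x, y)) (x, y) :=
    (((Dk_contDiff hf j).differentiable (by simp)) (x, y)).hasFDerivAt
  have hline : HasDerivAt (fun t : ℝ => ((x, t) : ℝ × ℝ)) (0, 1) y :=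
    (hasDerivAt_const y x).prodMk (hasDerivAt_id y)
  exact hd.comp_hasDerivAt y hline

theorem Dk_eq_iteratedDeriv {f : ℝ → ℝ → ℝ}
    (hf : ContDiff ℝ (⊤ : ℕ∞) (fun p : ℝ × ℝ => f p.1 p.2)) :
    ∀ (j : ℕ) (x y : ℝ), iteratedDeriv j (fun t => f x t) y = Dk f j (x, y)
  | 0, x, y => rfl
  | (j+1), x, y => by
    rw [iteratedDeriv_succ]
    have : iteratedDeriv j (fun t => f x t) = fun t => Dk f j (x, t) :=
      funext fun t => Dk_eq_iteratedDeriv hf j x t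
    rw [this]
    exact (Dk_partial hf j x y).deriv

noncomputable def Rad (ξ η : ℝ) : ℝ := |ξ| + 1 + (Real.sqrt |η| + 1)

theorem Rad_nonneg (ξ η : ℝ) : 0 ≤ Rad ξ η := by
  have := abs_nonneg ξ; have := Real.sqrt_nonneg |η|; unfold Rad; linarith

theorem radius_lemma {ξ η x s η'' : ℝ} (hs : |s - ξ| ≤ 1) (hη : η'' ≤ η)
    (hx : Rad ξ η < |x|) : s * x + η'' < x ^ 2 := by
  have h1 : |s| ≤ |ξ| + 1 := by
    have := abs_sub_abs_le_abs_sub s ξ; linarith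
  have hx0 : 0 ≤ |x| := abs_nonneg x
  have hsq : Real.sqrt |η| ≤ |x| := le_of_lt (lt_of_le_of_lt (by
    have := abs_nonneg ξ; unfold Rad at hx ⊢; linarith) hx)
  have h2 : |η| ≤ (Real.sqrt |η| + 1) * |x| := by
    have : Real.sqrt |η| * Real.sqrt |η| ≤ Real.sqrt |η| * |x| :=
      mul_le_mul_of_nonneg_left hsq (Real.sqrt_nonneg _)
    rw [Real.mul_self_sqrt (abs_nonneg η)] at this
    nlinarith [Real.sqrt_nonneg |η|]
  have h3 : s * x + η'' ≤ |s| * |x| + |η| := by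
    have := le_abs_self (s * x); rw [abs_mul] at this
    have := le_abs_self η; nlinarith
  have h4 : |s| * |x| + |η| ≤ (|ξ| + 1) * |x| + (Real.sqrt |η| + 1) * |x| :=
    add_le_add (mul_le_mul_of_nonneg_right h1 hx0) h2
  have h5 : (|ξ| + 1) * |x| + (Real.sqrt |η| + 1) * |x| = Rad ξ η * |x| := by
    unfold Rad; ring
  have h6 : Rad ξ η * |x| < |x| * |x| :=
    mul_lt_mul_of_pos_right hx (lt_of_le_of_lt (Rad_nonneg ξ η) hx)
  have h7 : |x| * |x| = x ^ 2 := by rw [← abs_mul, ← sq, abs_sq]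
  linarith

theorem Dk_chain {f : ℝ → ℝ → ℝ} (hf : ContDiff ℝ (⊤ : ℕ∞) (fun p : ℝ × ℝ => f p.1 p.2))
    (j : ℕ) (x η' s : ℝ) :
    HasDerivAt (fun s => x ^ j * Dk f j (x, s * x + η'))
      (x ^ (j+1) * Dk f (j+1) (x, s * x + η')) s := by
  have hin : HasDerivAt (fun s : ℝ => s * x + η') x s := by
    simpa using ((hasDerivAt_id s).mul_const x).add_const η'
  have h := ((Dk_partial hf j x (s * x + η')).comp s hin).const_mul (x ^ j)
  exact h.congr_deriv (by ring)

theorem Dk_cont {f : ℝ → ℝ → ℝ} (hf : ContDiff ℝ (⊤ : ℕ∞) (fun p : ℝ × ℝ => f p.1 p.2))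
    (j : ℕ) : Continuous (Dk f j) := (Dk_contDiff hf j).continuous

/-- bound on a compact box -/
theorem Dk_bound {f : ℝ → ℝ → ℝ} (hf : ContDiff ℝ (⊤ : ℕ∞) (fun p : ℝ × ℝ => f p.1 p.2))
    (j : ℕ) (R A B : ℝ) :
    ∃ M : ℝ, 0 ≤ M ∧ ∀ x y : ℝ, |x| ≤ R → A ≤ y → y ≤ B →
      |x ^ j * Dk f j (x, y)| ≤ M := by
  obtain ⟨M, hM⟩ := (isCompact_Icc.prod isCompact_Icc :
      IsCompact (Icc (-R) R ×ˢ Icc A B)).exists_bound_of_continuousOn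
    (Continuous.continuousOn
      (((continuous_fst.pow j).mul ((Dk_cont hf j).comp
        (continuous_fst.prodMk continuous_snd)))))
  refine ⟨max M 0, le_max_right _ _, fun x y hx hA hB => ?_⟩
  rcases abs_le.mp hx with ⟨h1, h2⟩
  have := hM (x, y) ⟨⟨h1, h2⟩, hA, hB⟩
  calc |x ^ j * Dk f j (x, y)| ≤ M := by
        simpa [Real.norm_eq_abs, abs_mul] using this
    _ ≤ max M 0 := le_max_left _ _

theorem Dk_unif_bound {f : ℝ → ℝ → ℝ} (hf : ContDiff ℝ (⊤ : ℕ∞) (fun p : ℝ × ℝ => f p.1 p.2))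
    (hsupp : ∀ x y : ℝ, y < x^2 → f x y = 0) (j : ℕ) (ξ η' : ℝ) :
    ∃ M : ℝ, 0 ≤ M ∧ ∀ s : ℝ, |s - ξ| ≤ 1 → ∀ x : ℝ,
      ‖x ^ j * Dk f j (x, s * x + η')‖ ≤
        Set.indicator (Icc (-(Rad ξ η')) (Rad ξ η')) (fun _ => M) x := by
  set R := Rad ξ η' with hR
  obtain ⟨M, hM0, hM⟩ := Dk_bound hf j R (η' - (|ξ| + 1) * R) (η' + (|ξ| + 1) * R)
  refine ⟨M, hM0, fun s hs x => ?_⟩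
  by_cases hx : |x| ≤ R
  · have hxmem : x ∈ Icc (-R) R := by
      rcases abs_le.mp hx with ⟨h1, h2⟩; exact ⟨h1, h2⟩
    rw [Set.indicator_of_mem hxmem]
    have hsabs : |s| ≤ |ξ| + 1 := by
      have := abs_sub_abs_le_abs_sub s ξ; linarith
    have hsx : |s * x| ≤ (|ξ| + 1) * R := by
      rw [abs_mul]
      exact mul_le_mul hsabs hx (abs_nonneg x) (by positivity)
    rcases abs_le.mp hsx with ⟨hl, hr⟩
    exact hM x (s * x + η') hx (by linarith) (by linarith)
  · push_neg at hx
    have hz : Dk f j (x, s * x + η') = 0 :=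
      Dk_zero hsupp j (x, s * x + η') (radius_lemma hs le_rfl hx)
    rw [hz, mul_zero, norm_zero]
    exact Set.indicator_nonneg (fun _ _ => hM0) x

theorem indicator_integrable (R M : ℝ) :
    Integrable (Set.indicator (Icc (-R) R) (fun _ => M)) (volume : Measure ℝ) := by
  rw [integrable_indicator_iff measurableSet_Icc]
  exact integrableOn_const measure_Icc_lt_top.ne

theorem Fcont {f : ℝ → ℝ → ℝ} (hf : ContDiff ℝ (⊤ : ℕ∞) (fun p : ℝ × ℝ => f p.1 p.2))
    (j : ℕ) (s η' : ℝ) : Continuous (fun x => x ^ j * Dk f j (x, s * x + η')) :=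
  (continuous_pow j).mul ((Dk_cont hf j).comp
    (continuous_id.prodMk ((continuous_const.mul continuous_id).add continuous_const)))

theorem integrable_aux {f : ℝ → ℝ → ℝ} (hf : ContDiff ℝ (⊤ : ℕ∞) (fun p : ℝ × ℝ => f p.1 p.2))
    (hsupp : ∀ x y : ℝ, y < x^2 → f x y = 0) (j : ℕ) (s η' : ℝ) :
    Integrable (fun x => x ^ j * Dk f j (x, s * x + η')) (volume : Measure ℝ) := by
  obtain ⟨M, _, hM⟩ := Dk_unif_bound hf hsupp j s η'
  exact (indicator_integrable (Rad s η') M).mono'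
    (Fcont hf j s η').aestronglyMeasurable
    (Filter.Eventually.of_forall (hM s (by simp) ))

theorem hasDeriv_integral {f : ℝ → ℝ → ℝ}
    (hf : ContDiff ℝ (⊤ : ℕ∞) (fun p : ℝ × ℝ => f p.1 p.2))
    (hsupp : ∀ x y : ℝ, y < x^2 → f x y = 0) (j : ℕ) (ξ η' : ℝ) :
    HasDerivAt (fun s => ∫ x : ℝ, x ^ j * Dk f j (x, s * x + η'))
      (∫ x : ℝ, x ^ (j+1) * Dk f (j+1) (x, ξ * x + η')) ξ := by
  obtain ⟨M, _, hM⟩ := Dk_unif_bound hf hsupp (j+1) ξ η'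
  exact (hasDerivAt_integral_of_dominated_loc_of_deriv_le (Metric.ball_mem_nhds ξ one_pos)
    (Filter.Eventually.of_forall fun s => (Fcont hf j s η').aestronglyMeasurable)
    (integrable_aux hf hsupp j ξ η')
    (Fcont hf (j+1) ξ η').aestronglyMeasurable
    (Filter.Eventually.of_forall fun x s hs =>
      hM s (le_of_lt (by simpa [Real.dist_eq] using hs)) x)
    (indicator_integrable (Rad ξ η') M)
    (Filter.Eventually.of_forall fun x s _ => Dk_chain hf j x η' s)).2

theorem iteratedDeriv_radon {f : ℝ → ℝ → ℝ}
    (hf : ContDiff ℝ (⊤ : ℕ∞) (fun p : ℝ × ℝ => f p.1 p.2))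
    (hsupp : ∀ x y : ℝ, y < x^2 → f x y = 0) :
    ∀ (k : ℕ) (ξ η' : ℝ), iteratedDeriv k (fun s => radon f s η') ξ =
      ∫ x : ℝ, x ^ k * Dk f k (x, ξ * x + η')
  | 0, ξ, η' => by simp [radon, Dk]
  | (k+1), ξ, η' => by
    rw [iteratedDeriv_succ]
    have : iteratedDeriv k (fun s => radon f s η') =
        fun s => ∫ x : ℝ, x ^ k * Dk f k (x, s * x + η') :=
      funext fun s => iteratedDeriv_radon hf hsupp k s η'
    rw [this]
    exact (hasDeriv_integral hf hsupp k ξ η').deriv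


theorem taylor_core (G : ℕ → ℝ → ℝ) (hG : ∀ j y, HasDerivAt (G j) (G (j+1) y) y)
    (hGc : ∀ j, Continuous (G j)) (a b : ℝ) (hGa : ∀ j, G j a = 0) :
    ∀ j : ℕ, (∫ y in a..b, ((b - y)^j / (Nat.factorial j : ℝ)) * G (j+1) y) = G 0 b
  | 0 => by
    simp only [pow_zero, Nat.factorial_zero, Nat.cast_one, div_one, one_mul]
    rw [intervalIntegral.integral_eq_sub_of_hasDerivAt (fun y _ => hG 0 y)
      ((hGc 1).intervalIntegrable a b), hGa 0, sub_zero]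
  | (j+1) => by
    have key := intervalIntegral.integral_mul_deriv_eq_deriv_mul
      (u := fun y => (b - y)^(j+1) / (Nat.factorial (j+1) : ℝ))
      (v := G (j+1))
      (u' := fun y => -((b - y)^j / (Nat.factorial j : ℝ)))
      (v' := G (j+2)) (a := a) (b := b)
      (fun y _ => by
        have h1 : HasDerivAt (fun y : ℝ => (b - y)^(j+1))
            (((j:ℝ)+1) * (b - y)^j * (-1)) y := by
          have := ((hasDerivAt_id y).const_sub b).fun_pow (j+1)
          simpa using this
        have h2 := h1.div_const (Nat.factorial (j+1) : ℝ)
        convert h2 using 1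
        have : (Nat.factorial (j+1) : ℝ) = ((j:ℝ)+1) * (Nat.factorial j : ℝ) := by
          rw [Nat.factorial_succ]; push_cast; ring
        rw [this]
        have hj : (Nat.factorial j : ℝ) ≠ 0 := Nat.cast_ne_zero.mpr (Nat.factorial_ne_zero j)
        field_simp)
      (fun y _ => hG (j+1) y)
      (((continuous_const.sub continuous_id).pow j |>.div_const _).neg.intervalIntegrable a b)
      ((hGc (j+2)).intervalIntegrable a b)
    simp only [hGa, sub_self, mul_zero, zero_mul, zero_pow (Nat.succ_ne_zero j), zero_div,
      sub_zero, zero_sub] at key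
    have key2 : (∫ y in a..b, ((b - y)^(j+1) / (Nat.factorial (j+1) : ℝ)) * G (j+2) y)
        = ∫ y in a..b, ((b - y)^j / (Nat.factorial j : ℝ)) * G (j+1) y := by
      rw [key, ← intervalIntegral.integral_neg]
      congr 1; funext y; ring
    rw [show j+1+1 = j+2 from rfl, key2]
    exact taylor_core G hG hGc a b hGa j

theorem taylor_Iic (G : ℕ → ℝ → ℝ) (hG : ∀ j y, HasDerivAt (G j) (G (j+1) y) y)
    (hGc : ∀ j, Continuous (G j)) (a b : ℝ) (hGa : ∀ j y, y ≤ a → G j y = 0)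
    (k : ℕ) (hk : 1 ≤ k) :
    (∫ y in Iic b, ((b - y)^(k-1) / (Nat.factorial (k-1) : ℝ)) * G k y) = G 0 b := by
  rcases le_or_gt b a with hba | hab
  · rw [hGa 0 b hba]
    exact setIntegral_eq_zero_of_forall_eq_zero fun y hy => by
      rw [hGa k y (le_trans hy hba), mul_zero]
  · have hab' : a ≤ b := le_of_lt hab
    set F := fun y => ((b - y)^(k-1) / (Nat.factorial (k-1) : ℝ)) * G k y with hF
    have hFc : Continuous F := by
      apply Continuous.mul
      · exact ((continuous_const.sub continuous_id).pow _).div_const _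
      · exact hGc k
    have hzero : ∀ y ∈ Iic a, F y = 0 := fun y hy => by
      rw [hF]; simp only []; rw [hGa k y hy, mul_zero]
    have hint1 : IntegrableOn F (Iic a) := by
      exact (integrableOn_zero).congr_fun (fun y hy => (hzero y hy).symm) measurableSet_Iic
    have hint2 : IntegrableOn F (Ioc a b) := hFc.integrableOn_Ioc
    have hsplit : (∫ y in Iic b, F y) = (∫ y in Iic a, F y) + ∫ y in Ioc a b, F y := by
      rw [← Iic_union_Ioc_eq_Iic hab', setIntegral_union (Iic_disjoint_Ioc le_rfl)
        measurableSet_Ioc hint1 hint2]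
    rw [hsplit, setIntegral_eq_zero_of_forall_eq_zero hzero, zero_add,
      ← intervalIntegral.integral_of_le hab']
    have := taylor_core G hG hGc a b (fun j => hGa j a le_rfl) (k-1)
    rwa [Nat.sub_add_cancel hk] at this

theorem inner_integral {f : ℝ → ℝ → ℝ}
    (hf : ContDiff ℝ (⊤ : ℕ∞) (fun p : ℝ × ℝ => f p.1 p.2))
    (hsupp : ∀ x y : ℝ, y < x^2 → f x y = 0)
    (k : ℕ) (hk : 1 ≤ k) (ξ η x : ℝ) :
    (∫ η' in Iic η, ((η - η')^(k-1) / (Nat.factorial (k-1) : ℝ)) * Dk f k (x, ξ * x + η'))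
      = f x (ξ * x + η) := by
  set G := fun (j : ℕ) (η' : ℝ) => Dk f j (x, ξ * x + η') with hGdef
  have hG : ∀ j y, HasDerivAt (G j) (G (j+1) y) y := by
    intro j y
    have hin : HasDerivAt (fun t : ℝ => ξ * x + t) 1 y := by
      simpa using (hasDerivAt_id y).const_add (ξ * x)
    have := (Dk_partial hf j x (ξ * x + y)).comp y hin
    exact this.congr_deriv (mul_one _)
  have hGc : ∀ j, Continuous (G j) := fun j =>
    (Dk_cont hf j).comp (continuous_const.prodMk (continuous_const.add continuous_id))
  have hGa : ∀ j, ∀ y ≤ (x^2 - ξ*x), G j y = 0 := by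
    intro j
    have h1 : Set.EqOn (G j) (fun _ => 0) (Iio (x^2 - ξ*x)) := by
      intro y hy
      exact Dk_zero hsupp j (x, ξ * x + y) (by simp only []; rw [mem_Iio] at hy; linarith)
    have h2 := h1.closure (hGc j) continuous_const
    rw [closure_Iio] at h2
    exact fun y hy => h2 hy
  exact taylor_Iic G hG hGc (x^2 - ξ*x) η hGa k hk

theorem stmt2 (f : ℝ → ℝ → ℝ)
    (hf : ContDiff ℝ (⊤ : ℕ∞) (fun p : ℝ × ℝ => f p.1 p.2))
    (hsupp : ∀ x y : ℝ, y < x^2 → f x y = 0)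
    (k : ℕ) (hk : 1 ≤ k) (ξ η : ℝ) :
    (∫ x : ℝ, x^k * f x (ξ * x + η)) =
      ∫ η' in Iic η,
        ((η - η')^(k-1) / (Nat.factorial (k-1) : ℝ)) *
          iteratedDeriv k (fun s => radon f s η') ξ := by
  set κ := fun η' : ℝ => ((η - η')^(k-1) / (Nat.factorial (k-1) : ℝ)) with hκ
  set φ := fun (η' x : ℝ) => κ η' * (x ^ k * Dk f k (x, ξ * x + η')) with hφ
  have hκc : Continuous κ := ((continuous_const.sub continuous_id).pow _).div_const _
  have hφc : Continuous (fun p : ℝ × ℝ => φ p.1 p.2) := by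
    apply Continuous.mul (hκc.comp continuous_fst)
    exact (continuous_snd.pow k).mul
      ((Dk_cont hf k).comp (continuous_snd.prodMk
        ((continuous_const.mul continuous_snd).add continuous_fst)))
  -- rewrite RHS integrand
  have step0 : ∀ η', κ η' * iteratedDeriv k (fun s => radon f s η') ξ = ∫ x : ℝ, φ η' x := by
    intro η'
    rw [iteratedDeriv_radon hf hsupp k ξ η', ← integral_const_mul]
  -- indicator version
  set ψ := Set.indicator ((Iic η) ×ˢ (univ : Set ℝ)) (fun p : ℝ × ℝ => φ p.1 p.2) with hψ
  have hψ_eq : ∀ η' x, ψ (η', x) = Set.indicator (Iic η) (fun t => φ t x) η' := by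
    intro η' x
    by_cases h : η' ∈ Iic η
    · rw [hψ, Set.indicator_of_mem (show (η', x) ∈ Iic η ×ˢ (univ : Set ℝ) from
        Set.mem_prod.mpr ⟨h, mem_univ x⟩), Set.indicator_of_mem h]
    · rw [hψ, Set.indicator_of_notMem (fun hc => h (Set.mem_prod.mp hc).1),
        Set.indicator_of_notMem h]
  -- integrability of ψ on the product
  set R := Rad ξ η with hRdef
  set lo := -(ξ^2 + 1) with hlo
  have hψ_int : Integrable ψ ((volume : Measure ℝ).prod volume) := by
    obtain ⟨C, hC⟩ := ((isCompact_Icc.prod isCompact_Icc) :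
        IsCompact (Icc lo η ×ˢ Icc (-R) R)).exists_bound_of_continuousOn hφc.continuousOn
    set M := max C 0 with hM
    have hM0 : (0:ℝ) ≤ M := le_max_right _ _
    have hbound : ∀ p : ℝ × ℝ, ‖ψ p‖ ≤
        Set.indicator (Icc lo η ×ˢ Icc (-R) R) (fun _ => M) p := by
      intro p
      by_cases hp : ψ p = 0
      · rw [hp, norm_zero]
        exact Set.indicator_nonneg (fun _ _ => hM0) p
      · have hpmem : p ∈ (Iic η) ×ˢ (univ : Set ℝ) := by
          by_contra hc
          exact hp (Set.indicator_of_notMem hc _)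
        have hψp : ψ p = φ p.1 p.2 := Set.indicator_of_mem hpmem _
        have hDk : Dk f k (p.2, ξ * p.2 + p.1) ≠ 0 := by
          intro hz
          apply hp
          rw [hψp, hφ]; simp only []; rw [hz, mul_zero, mul_zero]
        have hge : p.2^2 ≤ ξ * p.2 + p.1 := by
          by_contra hc
          exact hDk (Dk_zero hsupp k _ (by simpa using not_le.mp hc))
        have hη' : p.1 ≤ η := hpmem.1
        have hxR : |p.2| ≤ R := by
          by_contra hc
          exact absurd (radius_lemma (ξ := ξ) (η := η) (s := ξ) (by simp) hη'
            (not_le.mp hc)) (not_lt.mpr hge)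
        have hloη : lo ≤ p.1 := by nlinarith
        have hpbox : p ∈ Icc lo η ×ˢ Icc (-R) R := by
          refine ⟨⟨hloη, hη'⟩, ?_⟩
          rcases abs_le.mp hxR with ⟨h1, h2⟩
          exact ⟨h1, h2⟩
        rw [Set.indicator_of_mem hpbox, hψp]
        calc ‖φ p.1 p.2‖ ≤ C := by
              have := hC p hpbox
              simpa using this
          _ ≤ M := le_max_left _ _
    apply Integrable.mono' ?_ ?_ (Filter.Eventually.of_forall hbound)
    · rw [integrable_indicator_iff (measurableSet_Icc.prod measurableSet_Icc)]
      apply integrableOn_const ?_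
      rw [Measure.prod_prod]
      exact (ENNReal.mul_lt_top measure_Icc_lt_top measure_Icc_lt_top).ne
    · exact hφc.aestronglyMeasurable.indicator (measurableSet_Iic.prod MeasurableSet.univ)
  -- main computation
  calc (∫ x : ℝ, x^k * f x (ξ * x + η))
      = ∫ x : ℝ, ∫ η' : ℝ, ψ (η', x) := by
        congr 1; funext x
        have : (fun η' => ψ (η', x)) = Set.indicator (Iic η) (fun t => φ t x) :=
          funext fun η' => hψ_eq η' x
        rw [this, integral_indicator measurableSet_Iic]
        have : (∫ η' in Iic η, φ η' x) = x^k * f x (ξ * x + η) := by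
          rw [hφ]
          simp only []
          rw [show (fun η' => κ η' * (x ^ k * Dk f k (x, ξ * x + η'))) =
            (fun η' => x ^ k * (κ η' * Dk f k (x, ξ * x + η'))) from funext fun _ => by ring]
          rw [integral_const_mul, inner_integral hf hsupp k hk ξ η x]
        rw [this]
    _ = ∫ η' : ℝ, ∫ x : ℝ, ψ (η', x) := by
        have := (integral_integral_swap (f := fun η' x => ψ (η', x))
          (by exact hψ_int)).symm
        simpa using this
    _ = ∫ η' in Iic η, κ η' * iteratedDeriv k (fun s => radon f s η') ξ := by
        rw [← integral_indicator measurableSet_Iic]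
        congr 1; funext η'
        by_cases h : η' ∈ Iic η
        · rw [Set.indicator_of_mem h, step0 η']
          congr 1; funext x
          rw [hψ_eq η' x, Set.indicator_of_mem h]
        · rw [Set.indicator_of_notMem h]
          have hz : ∀ x, ψ (η', x) = 0 := fun x => by
            rw [hψ_eq, Set.indicator_of_notMem h]
          simp [hz]
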